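/- Let k be an algebraically closed field and let A and B be finite-dimensional k-algebras with A ≤_J B. If there are, up to isomorphism, only finitely many finite-dimensional indecomposable right A-modules, then there are, up to isomorphism, only finitely many finite-dimensional indecomposable right B-modules. In particular, if A ∼_J B then A has finite representation type if and only if B does. -/

import Mathlib

set_option linter.unusedSectionVars false

open scoped TensorProduct
open MulOpposite

universe u

namespace JJ

noncomputable section

section BalTensor

variable (B : Type u) [Ring B] (M : Type u) [AddCommGroup M] [Module Bᵐᵒᵖ M]
  (N : Type u) [AddCommGroup N] [Module B N]

/-- The subgroup of relations defining the balanced tensor product `M ⊗_B N`. -/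
def balRel : Submodule ℤ (TensorProduct ℤ M N) :=
  Submodule.span ℤ { z | ∃ (b : B) (m : M) (n : N),
    z = (op b • m) ⊗ₜ[ℤ] n - m ⊗ₜ[ℤ] (b • n) }

/-- The balanced tensor product `M ⊗_B N` of a right `B`-module `M` and a left `B`-module `N`. -/
def BalTensor : Type u := TensorProduct ℤ M N ⧸ balRel B M N

instance : AddCommGroup (BalTensor B M N) :=
  inferInstanceAs (AddCommGroup (TensorProduct ℤ M N ⧸ balRel B M N))

/-- The canonical projection onto the balanced tensor product. -/
def BalTensor.mk : TensorProduct ℤ M N →+ BalTensor B M N :=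
  (balRel B M N).mkQ.toAddMonoidHom

/-- The image of a pure tensor in the balanced tensor product. -/
def BalTensor.tmul (m : M) (n : N) : BalTensor B M N := BalTensor.mk B M N (m ⊗ₜ n)

lemma BalTensor.mk_surjective : Function.Surjective (BalTensor.mk B M N) :=
  Submodule.mkQ_surjective _

lemma BalTensor.balance (b : B) (m : M) (n : N) :
    BalTensor.tmul B M N (op b • m) n = BalTensor.tmul B M N m (b • n) := by
  have h : ((op b • m) ⊗ₜ[ℤ] n - m ⊗ₜ[ℤ] (b • n)) ∈ balRel B M N :=
    Submodule.subset_span ⟨b, m, n, rfl⟩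
  have h2 := (Submodule.Quotient.mk_eq_zero (balRel B M N)).2 h
  rw [Submodule.Quotient.mk_sub] at h2
  exact sub_eq_zero.1 h2

end BalTensor

section LeftAction

variable (B : Type u) [Ring B] (M : Type u) [AddCommGroup M] [Module Bᵐᵒᵖ M]
  (N : Type u) [AddCommGroup N] [Module B N]
  (A : Type u) [Ring A] [Module A M] [SMulCommClass A Bᵐᵒᵖ M]

/-- The left action of `a : A` on the plain tensor product. -/
def lActAux (a : A) : TensorProduct ℤ M N →ₗ[ℤ] TensorProduct ℤ M N :=
  LinearMap.rTensor N (DistribMulAction.toAddMonoidHom M a).toIntLinearMap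

lemma lActAux_tmul (a : A) (m : M) (n : N) :
    lActAux M N A a (m ⊗ₜ n) = (a • m) ⊗ₜ n := by
  first | rfl | exact LinearMap.rTensor_tmul _ _ _ _ | exact LinearMap.rTensor_tmul _ _ _

lemma lActAux_rel (a : A) :
    balRel B M N ≤ (balRel B M N).comap (lActAux M N A a) := by
  rw [balRel, Submodule.span_le]
  rintro z ⟨b, m, n, rfl⟩
  simp only [SetLike.mem_coe, Submodule.mem_comap, map_sub, lActAux_tmul]
  rw [smul_comm a (op b) m]
  exact Submodule.subset_span ⟨b, a • m, n, rfl⟩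

/-- The left action of `A` on the balanced tensor product. -/
def lAct (a : A) : BalTensor B M N →ₗ[ℤ] BalTensor B M N :=
  Submodule.mapQ _ _ (lActAux M N A a) (lActAux_rel B M N A a)

instance : SMul A (BalTensor B M N) := ⟨fun a x => lAct B M N A a x⟩

lemma BalTensor.lsmul_mk (a : A) (x : TensorProduct ℤ M N) :
    a • (BalTensor.mk B M N x) = BalTensor.mk B M N (lActAux M N A a x) := rfl

lemma BalTensor.lsmul_tmul (a : A) (m : M) (n : N) :
    a • (BalTensor.tmul B M N m n) = BalTensor.tmul B M N (a • m) n := by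
  rw [BalTensor.tmul, BalTensor.lsmul_mk, lActAux_tmul]
  rfl

instance BalTensor.instLeftModule : Module A (BalTensor B M N) where
  one_smul x := by
    obtain ⟨y, rfl⟩ := BalTensor.mk_surjective B M N x
    rw [BalTensor.lsmul_mk]
    congr 1
    have h : lActAux M N A (1 : A) = LinearMap.id :=
      LinearMap.ext fun y => TensorProduct.induction_on y (by simp only [map_zero]) (fun m n => by rw [lActAux_tmul, one_smul]; rfl) (fun x y hx hy => by simp only [map_add, hx, hy])
    rw [h]; rfl
  mul_smul a b x := by
    obtain ⟨y, rfl⟩ := BalTensor.mk_surjective B M N x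
    rw [BalTensor.lsmul_mk, BalTensor.lsmul_mk, BalTensor.lsmul_mk]
    congr 1
    have h : lActAux M N A (a * b) = (lActAux M N A a).comp (lActAux M N A b) :=
      LinearMap.ext fun y => TensorProduct.induction_on y (by simp only [map_zero]) (fun m n => by
        simp only [LinearMap.comp_apply, lActAux_tmul, mul_smul]) (fun x y hx hy => by simp only [map_add, hx, hy])
    rw [h]; rfl
  smul_zero a := map_zero (lAct B M N A a)
  smul_add a x y := map_add (lAct B M N A a) x y
  add_smul a b x := by
    obtain ⟨y, rfl⟩ := BalTensor.mk_surjective B M N x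
    rw [BalTensor.lsmul_mk, BalTensor.lsmul_mk, BalTensor.lsmul_mk, ← map_add]
    congr 1
    have h : lActAux M N A (a + b) = lActAux M N A a + lActAux M N A b :=
      LinearMap.ext fun y => TensorProduct.induction_on y (by simp only [map_zero]) (fun m n => by
        simp only [LinearMap.add_apply, lActAux_tmul, add_smul, TensorProduct.add_tmul]) (fun x y hx hy => by simp only [map_add, hx, hy])
    rw [h]; rfl
  zero_smul x := by
    obtain ⟨y, rfl⟩ := BalTensor.mk_surjective B M N x
    rw [BalTensor.lsmul_mk]
    have h : lActAux M N A (0 : A) = 0 :=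
      LinearMap.ext fun y => TensorProduct.induction_on y (by simp only [map_zero]) (fun m n => by
        simp only [lActAux_tmul, zero_smul, TensorProduct.zero_tmul, LinearMap.zero_apply]) (fun x y hx hy => by simp only [map_add, hx, hy])
    rw [h]
    simp

end LeftAction

section RightAction

variable (B : Type u) [Ring B] (M : Type u) [AddCommGroup M] [Module Bᵐᵒᵖ M]
  (N : Type u) [AddCommGroup N] [Module B N]
  (C : Type u) [Ring C] [Module Cᵐᵒᵖ N] [SMulCommClass B Cᵐᵒᵖ N]

/-- The right action of `c : Cᵐᵒᵖ` on the plain tensor product. -/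
def rActAux (c : Cᵐᵒᵖ) : TensorProduct ℤ M N →ₗ[ℤ] TensorProduct ℤ M N :=
  LinearMap.lTensor M (DistribMulAction.toAddMonoidHom N c).toIntLinearMap

lemma rActAux_tmul (c : Cᵐᵒᵖ) (m : M) (n : N) :
    rActAux M N C c (m ⊗ₜ n) = m ⊗ₜ (c • n) := by
  first | rfl | exact LinearMap.lTensor_tmul _ _ _ _ | exact LinearMap.lTensor_tmul _ _ _

lemma rActAux_rel (c : Cᵐᵒᵖ) :
    balRel B M N ≤ (balRel B M N).comap (rActAux M N C c) := by
  rw [balRel, Submodule.span_le]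
  rintro z ⟨b, m, n, rfl⟩
  simp only [SetLike.mem_coe, Submodule.mem_comap, map_sub, rActAux_tmul]
  rw [← smul_comm b c n]
  exact Submodule.subset_span ⟨b, m, c • n, rfl⟩

/-- The right action of `Cᵐᵒᵖ` on the balanced tensor product. -/
def rAct (c : Cᵐᵒᵖ) : BalTensor B M N →ₗ[ℤ] BalTensor B M N :=
  Submodule.mapQ _ _ (rActAux M N C c) (rActAux_rel B M N C c)

instance : SMul Cᵐᵒᵖ (BalTensor B M N) := ⟨fun c x => rAct B M N C c x⟩

lemma BalTensor.rsmul_mk (c : Cᵐᵒᵖ) (x : TensorProduct ℤ M N) :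
    c • (BalTensor.mk B M N x) = BalTensor.mk B M N (rActAux M N C c x) := rfl

lemma BalTensor.rsmul_tmul (c : Cᵐᵒᵖ) (m : M) (n : N) :
    c • (BalTensor.tmul B M N m n) = BalTensor.tmul B M N m (c • n) := by
  rw [BalTensor.tmul, BalTensor.rsmul_mk, rActAux_tmul]
  rfl

instance BalTensor.instRightModule : Module Cᵐᵒᵖ (BalTensor B M N) where
  one_smul x := by
    obtain ⟨y, rfl⟩ := BalTensor.mk_surjective B M N x
    rw [BalTensor.rsmul_mk]
    congr 1
    have h : rActAux M N C (1 : Cᵐᵒᵖ) = LinearMap.id :=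
      LinearMap.ext fun y => TensorProduct.induction_on y (by simp only [map_zero]) (fun m n => by rw [rActAux_tmul, one_smul]; rfl) (fun x y hx hy => by simp only [map_add, hx, hy])
    rw [h]; rfl
  mul_smul a b x := by
    obtain ⟨y, rfl⟩ := BalTensor.mk_surjective B M N x
    rw [BalTensor.rsmul_mk, BalTensor.rsmul_mk, BalTensor.rsmul_mk]
    congr 1
    have h : rActAux M N C (a * b) = (rActAux M N C a).comp (rActAux M N C b) :=
      LinearMap.ext fun y => TensorProduct.induction_on y (by simp only [map_zero]) (fun m n => by
        simp only [LinearMap.comp_apply, rActAux_tmul, mul_smul]) (fun x y hx hy => by simp only [map_add, hx, hy])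
    rw [h]; rfl
  smul_zero c := map_zero (rAct B M N C c)
  smul_add c x y := map_add (rAct B M N C c) x y
  add_smul a b x := by
    obtain ⟨y, rfl⟩ := BalTensor.mk_surjective B M N x
    rw [BalTensor.rsmul_mk, BalTensor.rsmul_mk, BalTensor.rsmul_mk, ← map_add]
    congr 1
    have h : rActAux M N C (a + b) = rActAux M N C a + rActAux M N C b :=
      LinearMap.ext fun y => TensorProduct.induction_on y (by simp only [map_zero]) (fun m n => by
        simp only [LinearMap.add_apply, rActAux_tmul, add_smul, TensorProduct.tmul_add]) (fun x y hx hy => by simp only [map_add, hx, hy])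
    rw [h]; rfl
  zero_smul x := by
    obtain ⟨y, rfl⟩ := BalTensor.mk_surjective B M N x
    rw [BalTensor.rsmul_mk]
    have h : rActAux M N C (0 : Cᵐᵒᵖ) = 0 :=
      LinearMap.ext fun y => TensorProduct.induction_on y (by simp only [map_zero]) (fun m n => by
        simp only [rActAux_tmul, zero_smul, TensorProduct.tmul_zero, LinearMap.zero_apply]) (fun x y hx hy => by simp only [map_add, hx, hy])
    rw [h]
    simp

end RightAction

section Comm

variable (B : Type u) [Ring B] (M : Type u) [AddCommGroup M] [Module Bᵐᵒᵖ M]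
  (N : Type u) [AddCommGroup N] [Module B N]
  (A : Type u) [Ring A] [Module A M] [SMulCommClass A Bᵐᵒᵖ M]
  (C : Type u) [Ring C] [Module Cᵐᵒᵖ N] [SMulCommClass B Cᵐᵒᵖ N]

instance BalTensor.instSMulCommClass : SMulCommClass A Cᵐᵒᵖ (BalTensor B M N) := by
  constructor
  intro a c x
  obtain ⟨y, rfl⟩ := BalTensor.mk_surjective B M N x
  rw [BalTensor.rsmul_mk, BalTensor.lsmul_mk, BalTensor.lsmul_mk, BalTensor.rsmul_mk]
  congr 1
  have h : (lActAux M N A a).comp (rActAux M N C c)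
      = (rActAux M N C c).comp (lActAux M N A a) :=
    LinearMap.ext fun y => TensorProduct.induction_on y (by simp only [map_zero]) (fun m n => by
      simp only [LinearMap.comp_apply, lActAux_tmul, rActAux_tmul]) (fun x y hx hy => by simp only [map_add, hx, hy])
  exact DFunLike.congr_fun h y

end Comm

section BimodHom

variable (A : Type u) [Ring A] (C : Type u) [Ring C]
variable (X : Type u) [AddCommGroup X] [Module A X] [Module Cᵐᵒᵖ X]
variable (Y : Type u) [AddCommGroup Y] [Module A Y] [Module Cᵐᵒᵖ Y]

/-- A map of `(A,C)`-bimodules: additive, left `A`-equivariant and right `C`-equivariant. -/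
structure IsBimodHom (f : X → Y) : Prop where
  map_add : ∀ x y, f (x + y) = f x + f y
  map_lsmul : ∀ (a : A) (x : X), f (a • x) = a • f x
  map_rsmul : ∀ (c : Cᵐᵒᵖ) (x : X), f (c • x) = c • f x

/-- `X` is (isomorphic to) a direct summand of `Y` as an `(A,C)`-bimodule,
i.e. a retract of `Y`. -/
def IsBimodSummand : Prop :=
  ∃ (i : X → Y) (p : Y → X), IsBimodHom A C X Y i ∧ IsBimodHom A C Y X p ∧ ∀ x, p (i x) = x

end BimodHom

section Jorder

variable (k : Type u) [Field k]

/-- A finite-dimensional `(A,B)`-bimodule over `k`, whose two induced `k`-actions agree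
with the given one. -/
structure BimodData (A B : Type u) [Ring A] [Ring B] [Algebra k A] [Algebra k B] :
    Type (u + 1) where
  X : Type u
  [acg : AddCommGroup X]
  [modk : Module k X]
  [modl : Module A X]
  [modr : Module Bᵐᵒᵖ X]
  [scc : SMulCommClass A Bᵐᵒᵖ X]
  [tl : IsScalarTower k A X]
  [tr : IsScalarTower k Bᵐᵒᵖ X]
  [fd : FiniteDimensional k X]

attribute [instance] BimodData.acg BimodData.modk BimodData.modl BimodData.modr BimodData.scc
  BimodData.tl BimodData.tr BimodData.fd

variable (A B : Type u) [Ring A] [Ring B] [Algebra k A] [Algebra k B]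

/-- `A ≥_J B`: there are finite-dimensional bimodules `M`, `N` such that the regular
`A`-`A`-bimodule `A` is a direct summand of `M ⊗_B N`. -/
def Jge : Prop :=
  ∃ (M : BimodData k A B) (N : BimodData k B A),
    IsBimodSummand A A A (BalTensor B M.X N.X)

/-- `A ≤_J B`. -/
def Jle : Prop := Jge k B A

/-- `A ∼_J B`: two-sided equivalence. -/
def Jequiv : Prop := Jge k A B ∧ Jge k B A

/-- `A >_J B`: strict two-sided inequality. -/
def Jgt : Prop := Jge k A B ∧ ¬ Jge k B A

end Jorder


section RepType

/-- An indecomposable module: nonzero, and admitting no splitting into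
two nonzero complementary submodules. -/
def IsIndecomposableModule (R X : Type u) [Ring R] [AddCommGroup X] [Module R X] : Prop :=
  Nontrivial X ∧ ∀ S T : Submodule R X, IsCompl S T → S = ⊥ ∨ T = ⊥

/-- A ring has finite representation type if there are, up to isomorphism, only finitely
many finite (i.e. finite-dimensional) indecomposable modules. -/
def FiniteRepresentationType (R : Type u) [Ring R] : Prop :=
  ∃ (n : ℕ) (V : Fin n → ModuleCat.{u} R),
    ∀ (X : ModuleCat.{u} R), Module.Finite R X → IsIndecomposableModule R X →
      ∃ i, Nonempty (X ≃ₗ[R] V i)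

end RepType

section AuxBal

variable (B : Type u) [Ring B] (M : Type u) [AddCommGroup M] [Module Bᵐᵒᵖ M]
  (N : Type u) [AddCommGroup N] [Module B N]

lemma BalTensor.induction_on {P : BalTensor B M N → Prop} (z : BalTensor B M N)
    (h0 : P 0) (ht : ∀ m n, P (BalTensor.tmul B M N m n))
    (ha : ∀ x y, P x → P y → P (x + y)) : P z := by
  obtain ⟨y, rfl⟩ := BalTensor.mk_surjective B M N z
  induction y using TensorProduct.induction_on with
  | zero => simpa using h0
  | tmul m n => exact ht m n
  | add x y hx hy => rw [map_add]; exact ha _ _ hx hy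

lemma BalTensor.tmul_add (m : M) (n n' : N) :
    BalTensor.tmul B M N m (n + n') = BalTensor.tmul B M N m n + BalTensor.tmul B M N m n' := by
  simp only [BalTensor.tmul, TensorProduct.tmul_add, map_add]

lemma BalTensor.add_tmul (m m' : M) (n : N) :
    BalTensor.tmul B M N (m + m') n = BalTensor.tmul B M N m n + BalTensor.tmul B M N m' n := by
  simp only [BalTensor.tmul, TensorProduct.add_tmul, map_add]

lemma BalTensor.tmul_zero (m : M) : BalTensor.tmul B M N m 0 = 0 := by
  simp only [BalTensor.tmul, TensorProduct.tmul_zero, map_zero]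

lemma BalTensor.zero_tmul (n : N) : BalTensor.tmul B M N 0 n = 0 := by
  simp only [BalTensor.tmul, TensorProduct.zero_tmul, map_zero]

variable (P : Type u) [AddCommGroup P]

/-- Descend a balanced biadditive map to the balanced tensor product. -/
def balLift (f : M → N → P)
    (h1 : ∀ m m' n, f (m + m') n = f m n + f m' n)
    (h2 : ∀ m n n', f m (n + n') = f m n + f m n')
    (hb : ∀ (b : B) m n, f (op b • m) n = f m (b • n)) :
    BalTensor B M N →+ P :=
  (Submodule.liftQ (balRel B M N)
    (TensorProduct.lift ((AddMonoidHom.mk'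
        (fun m => (AddMonoidHom.mk' (f m) (h2 m)).toIntLinearMap)
        (fun m m' => by ext n; exact h1 m m' n)).toIntLinearMap))
    (by
      rw [balRel, Submodule.span_le]
      rintro z ⟨b, m, n, rfl⟩
      simp only [SetLike.mem_coe, LinearMap.mem_ker, map_sub, TensorProduct.lift.tmul]
      refine LinearMap.mem_ker.2 ?_
      erw [map_sub, TensorProduct.lift.tmul, TensorProduct.lift.tmul]
      exact sub_eq_zero.2 (hb b m n))).toAddMonoidHom

lemma balLift_tmul (f : M → N → P) (h1) (h2) (hb) (m : M) (n : N) :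
    balLift B M N P f h1 h2 hb (BalTensor.tmul B M N m n) = f m n := by
  simp only [balLift, BalTensor.tmul, BalTensor.mk, LinearMap.toAddMonoidHom_coe]
  rfl

end AuxBal

section Gmap

variable (B : Type u) [Ring B] (M M' M'' : Type u)
  [AddCommGroup M] [Module Bᵐᵒᵖ M] [AddCommGroup M'] [Module Bᵐᵒᵖ M']
  [AddCommGroup M''] [Module Bᵐᵒᵖ M'']
  (N : Type u) [AddCommGroup N] [Module B N]

/-- Functoriality of the balanced tensor product in the first argument. -/
def gmap (f : M →ₗ[Bᵐᵒᵖ] M') : BalTensor B M N →+ BalTensor B M' N :=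
  balLift B M N (BalTensor B M' N) (fun m n => BalTensor.tmul B M' N (f m) n)
    (fun m m' n => by simp only [map_add, BalTensor.add_tmul])
    (fun m n n' => BalTensor.tmul_add B M' N (f m) n n')
    (fun b m n => by simp only [map_smul, BalTensor.balance])

lemma gmap_tmul (f : M →ₗ[Bᵐᵒᵖ] M') (m : M) (n : N) :
    gmap B M M' N f (BalTensor.tmul B M N m n) = BalTensor.tmul B M' N (f m) n :=
  balLift_tmul _ _ _ _ _ _ _ _ _ _

lemma gmap_id (z : BalTensor B M N) : gmap B M M N LinearMap.id z = z := by
  induction z using BalTensor.induction_on with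
  | h0 => simp
  | ht m n => rw [gmap_tmul]; rfl
  | ha x y hx hy => rw [map_add, hx, hy]

lemma gmap_comp (f : M →ₗ[Bᵐᵒᵖ] M') (g : M' →ₗ[Bᵐᵒᵖ] M'') (z : BalTensor B M N) :
    gmap B M M'' N (g ∘ₗ f) z = gmap B M' M'' N g (gmap B M M' N f z) := by
  induction z using BalTensor.induction_on with
  | h0 => simp
  | ht m n => simp only [gmap_tmul]; rfl
  | ha x y hx hy => simp only [map_add, hx, hy]

lemma gmap_zero (z : BalTensor B M N) : gmap B M M' N 0 z = 0 := by
  induction z using BalTensor.induction_on with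
  | h0 => simp
  | ht m n => rw [gmap_tmul]; exact BalTensor.zero_tmul B M' N n
  | ha x y hx hy => rw [map_add, hx, hy, add_zero]

lemma gmap_add (f f' : M →ₗ[Bᵐᵒᵖ] M') (z : BalTensor B M N) :
    gmap B M M' N (f + f') z = gmap B M M' N f z + gmap B M M' N f' z := by
  induction z using BalTensor.induction_on with
  | h0 => simp
  | ht m n =>
      simp only [gmap_tmul, LinearMap.add_apply]
      exact BalTensor.add_tmul B M' N (f m) (f' m) n
  | ha x y hx hy =>
      simp only [map_add, hx, hy]
      abel

lemma gmap_sum {ι : Type} (s : Finset ι) (f : ι → (M →ₗ[Bᵐᵒᵖ] M')) (z : BalTensor B M N) :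
    gmap B M M' N (∑ j ∈ s, f j) z = ∑ j ∈ s, gmap B M M' N (f j) z := by
  classical
  induction s using Finset.induction_on with
  | empty => simpa using gmap_zero B M M' N z
  | insert a s hnot ih =>
      rw [Finset.sum_insert hnot, Finset.sum_insert hnot, gmap_add, ih]

variable (C : Type u) [Ring C] [Module Cᵐᵒᵖ N] [SMulCommClass B Cᵐᵒᵖ N]

lemma gmap_rsmul (f : M →ₗ[Bᵐᵒᵖ] M') (c : Cᵐᵒᵖ) (z : BalTensor B M N) :
    gmap B M M' N f (c • z) = c • gmap B M M' N f z := by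
  induction z using BalTensor.induction_on with
  | h0 => rw [smul_zero, map_zero, smul_zero]
  | ht m n => rw [BalTensor.rsmul_tmul, gmap_tmul, gmap_tmul, BalTensor.rsmul_tmul]
  | ha x y hx hy => rw [smul_add, map_add, map_add, hx, hy, smul_add]

/-- `gmap` as a linear map over `Cᵐᵒᵖ`. -/
def gmapL (f : M →ₗ[Bᵐᵒᵖ] M') : BalTensor B M N →ₗ[Cᵐᵒᵖ] BalTensor B M' N where
  toFun := gmap B M M' N f
  map_add' := map_add _
  map_smul' := fun c z => gmap_rsmul B M M' N C f c z

lemma gmapL_apply (f : M →ₗ[Bᵐᵒᵖ] M') (z : BalTensor B M N) :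
    gmapL B M M' N C f z = gmap B M M' N f z := rfl

end Gmap

section Retract

variable (A B : Type u) [Ring A] [Ring B]
  (M : Type u) [AddCommGroup M] [Module B M] [Module Aᵐᵒᵖ M] [SMulCommClass B Aᵐᵒᵖ M]
  (N : Type u) [AddCommGroup N] [Module A N] [Module Bᵐᵒᵖ N] [SMulCommClass A Bᵐᵒᵖ N]
  (X : Type u) [AddCommGroup X] [Module Bᵐᵒᵖ X]

/-- The natural map `x ⊗ (M ⊗ N) → (X ⊗ M) ⊗ N`. -/
def phi (x : X) : BalTensor A M N →+ BalTensor A (BalTensor B X M) N :=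
  balLift A M N _
    (fun m n => BalTensor.tmul A (BalTensor B X M) N (BalTensor.tmul B X M x m) n)
    (fun m m' n => by
      simp only [BalTensor.tmul_add B X M x m m', BalTensor.add_tmul])
    (fun m n n' => BalTensor.tmul_add _ _ _ _ _ _)
    (fun a m n => by
      simp only [← BalTensor.rsmul_tmul B X M A (op a) x m, BalTensor.balance])

lemma phi_tmul (x : X) (m : M) (n : N) :
    phi A B M N X x (BalTensor.tmul A M N m n)
      = BalTensor.tmul A (BalTensor B X M) N (BalTensor.tmul B X M x m) n :=
  balLift_tmul _ _ _ _ _ _ _ _ _ _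

lemma phi_add (x x' : X) (t : BalTensor A M N) :
    phi A B M N X (x + x') t = phi A B M N X x t + phi A B M N X x' t := by
  induction t using BalTensor.induction_on with
  | h0 => simp
  | ht m n => simp only [phi_tmul, BalTensor.add_tmul]
  | ha s t hs ht => simp only [map_add, hs, ht]; abel

lemma phi_lsmul (b : B) (x : X) (t : BalTensor A M N) :
    phi A B M N X (op b • x) t = phi A B M N X x (b • t) := by
  induction t using BalTensor.induction_on with
  | h0 => simp
  | ht m n =>
      rw [BalTensor.lsmul_tmul A M N B b m n, phi_tmul, phi_tmul,
        BalTensor.balance B X M b x m]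
  | ha s t hs ht => rw [smul_add, map_add, map_add, hs, ht]

lemma phi_rsmul (b : B) (x : X) (t : BalTensor A M N) :
    phi A B M N X x (op b • t) = op b • phi A B M N X x t := by
  induction t using BalTensor.induction_on with
  | h0 => simp
  | ht m n =>
      rw [BalTensor.rsmul_tmul A M N B (op b) m n, phi_tmul, phi_tmul,
        BalTensor.rsmul_tmul A (BalTensor B X M) N B (op b)]
  | ha s t hs ht => rw [smul_add, map_add, map_add, hs, ht, smul_add]

variable (pbar : BalTensor A M N → B)
  (hadd : ∀ s t, pbar (s + t) = pbar s + pbar t)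
  (hl : ∀ (b : B) t, pbar (b • t) = b • pbar t)
  (hr : ∀ (c : Bᵐᵒᵖ) t, pbar (c • t) = c • pbar t)

/-- For fixed `n : N`, the map `(X ⊗ M) → X`, `x ⊗ m ↦ x · pbar (m ⊗ n)`. -/
def pInner (n : N) : BalTensor B X M →+ X :=
  balLift B X M X (fun x m => (op (pbar (BalTensor.tmul A M N m n))) • x)
    (fun x x' m => by simp only [smul_add])
    (fun x m m' => by
      simp only [BalTensor.add_tmul A M N m m' n, hadd, op_add, add_smul])
    (fun b x m => by
      simp only [← BalTensor.lsmul_tmul A M N B b m n, hl, smul_eq_mul, smul_smul,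
        ← MulOpposite.op_mul])

lemma pInner_tmul (n : N) (x : X) (m : M) :
    pInner A B M N X pbar hadd hl (n := n) (BalTensor.tmul B X M x m)
      = (op (pbar (BalTensor.tmul A M N m n))) • x :=
  balLift_tmul _ _ _ _ _ _ _ _ _ _

lemma pInner_add (n n' : N) (t : BalTensor B X M) :
    pInner A B M N X pbar hadd hl (n := n + n') t
      = pInner A B M N X pbar hadd hl (n := n) t
        + pInner A B M N X pbar hadd hl (n := n') t := by
  induction t using BalTensor.induction_on with
  | h0 => simp
  | ht x m => simp only [pInner_tmul, BalTensor.tmul_add A M N m n n', hadd, op_add, add_smul]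
  | ha s t hs ht => simp only [map_add, hs, ht]; abel

lemma pInner_bal (a : A) (n : N) (t : BalTensor B X M) :
    pInner A B M N X pbar hadd hl (n := n) (op a • t)
      = pInner A B M N X pbar hadd hl (n := a • n) t := by
  induction t using BalTensor.induction_on with
  | h0 => simp
  | ht x m =>
      rw [BalTensor.rsmul_tmul B X M A (op a) x m, pInner_tmul, pInner_tmul,
        BalTensor.balance A M N a m n]
  | ha s t hs ht => rw [smul_add, map_add, map_add, hs, ht]

/-- The map `(X ⊗ M) ⊗ N → X`. -/
def pMap : BalTensor A (BalTensor B X M) N →+ X :=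
  balLift A (BalTensor B X M) N X
    (fun t n => pInner A B M N X pbar hadd hl (n := n) t)
    (fun t t' n => map_add _ t t')
    (fun t n n' => pInner_add A B M N X pbar hadd hl n n' t)
    (fun a t n => pInner_bal A B M N X pbar hadd hl a n t)

lemma pMap_tmul (t : BalTensor B X M) (n : N) :
    pMap A B M N X pbar hadd hl (BalTensor.tmul A (BalTensor B X M) N t n)
      = pInner A B M N X pbar hadd hl (n := n) t :=
  balLift_tmul _ _ _ _ _ _ _ _ _ _

include hr in
lemma pMap_rsmul (b : Bᵐᵒᵖ) (w : BalTensor A (BalTensor B X M) N) :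
    pMap A B M N X pbar hadd hl (b • w) = b • pMap A B M N X pbar hadd hl w := by
  induction w using BalTensor.induction_on with
  | h0 => simp
  | ht t n =>
      rw [BalTensor.rsmul_tmul A (BalTensor B X M) N B b t n, pMap_tmul, pMap_tmul]
      induction t using BalTensor.induction_on with
      | h0 => simp
      | ht x m =>
          rw [pInner_tmul, pInner_tmul, ← BalTensor.rsmul_tmul A M N B b m n, hr]
          induction b using MulOpposite.rec' with
          | h b' => rw [op_smul_eq_mul, MulOpposite.op_mul, mul_smul]
      | ha s t hs ht => simp only [map_add, hs, ht, smul_add]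
  | ha s t hs ht => rw [smul_add, map_add, map_add, hs, ht, smul_add]

include hadd in
lemma pbar_zero : pbar 0 = 0 := by
  have h0 := hadd 0 0
  rw [add_zero] at h0
  have := congrArg (fun y => y - pbar 0) h0
  simpa using this.symm

lemma pMap_phi (x : X) (t : BalTensor A M N) :
    pMap A B M N X pbar hadd hl (phi A B M N X x t) = (op (pbar t)) • x := by
  induction t using BalTensor.induction_on with
  | h0 =>
      rw [map_zero, map_zero, pbar_zero A B M N pbar hadd, op_zero, zero_smul]
  | ht m n => rw [phi_tmul, pMap_tmul, pInner_tmul]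
  | ha s t hs ht => rw [map_add, map_add, hs, ht, hadd, op_add, add_smul]

include hadd hl hr in
/-- The key retract: if the regular bimodule `B` is a summand of `M ⊗_A N`, then any
right `B`-module `X` is a retract of `(X ⊗_B M) ⊗_A N`. -/
theorem retract_exists
    (ι : B → BalTensor A M N) (hι : IsBimodHom B B B (BalTensor A M N) ι)
    (hp : IsBimodHom B B (BalTensor A M N) B pbar) (hpι : ∀ y, pbar (ι y) = y) :
    ∃ (i : X →ₗ[Bᵐᵒᵖ] BalTensor A (BalTensor B X M) N)
      (p : BalTensor A (BalTensor B X M) N →ₗ[Bᵐᵒᵖ] X), ∀ x, p (i x) = x := by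
  refine ⟨⟨⟨fun x => phi A B M N X x (ι 1), fun x x' => phi_add A B M N X x x' (ι 1)⟩,
      fun b x => ?_⟩,
    ⟨⟨pMap A B M N X pbar hadd hl, map_add _⟩,
      fun b w => pMap_rsmul A B M N X pbar hadd hl hr b w⟩,
    fun x => ?_⟩
  · induction b using MulOpposite.rec' with
    | h b' =>
        simp only [RingHom.id_apply]
        have h1 : ι (b' • (1 : B)) = b' • ι 1 := hι.map_lsmul b' 1
        have h2 : ι (op b' • (1 : B)) = op b' • ι 1 := hι.map_rsmul (op b') 1
        rw [smul_eq_mul, mul_one] at h1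
        rw [op_smul_eq_mul, one_mul] at h2
        rw [phi_lsmul, ← h1, h2, phi_rsmul]
  · simp only [LinearMap.coe_mk, AddHom.coe_mk]
    rw [pMap_phi, hpι 1, op_one, one_smul]

end Retract

section ModTheory

variable (k : Type u) [Field k] (R : Type u) [Ring R] [Algebra k R]

/-- Fitting's lemma. -/
theorem fitting (X : Type u) [AddCommGroup X] [Module R X] [Module k X]
    [IsScalarTower k R X] [FiniteDimensional k X] (f : X →ₗ[R] X) :
    ∃ i : ℕ, 0 < i ∧ IsCompl (LinearMap.ker (f ^ i)) (LinearMap.range (f ^ i)) := by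
  have kmono : ∀ i j : ℕ, i ≤ j → LinearMap.ker (f ^ i) ≤ LinearMap.ker (f ^ j) := by
    intro i j hij
    obtain ⟨c, rfl⟩ := Nat.exists_eq_add_of_le hij
    intro x hx
    rw [LinearMap.mem_ker] at hx ⊢
    rw [add_comm, pow_add, Module.End.mul_apply, hx, map_zero]
  have rmono : ∀ i j : ℕ, i ≤ j → LinearMap.range (f ^ j) ≤ LinearMap.range (f ^ i) := by
    intro i j hij
    obtain ⟨c, rfl⟩ := Nat.exists_eq_add_of_le hij
    rintro x ⟨y, rfl⟩
    exact ⟨(f ^ c) y, by rw [← Module.End.mul_apply, ← pow_add]⟩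
  set d : ℕ → ℕ := fun i =>
    Module.finrank k (Submodule.restrictScalars k (LinearMap.ker (f ^ i))) with hd
  have dmono : ∀ i j : ℕ, i ≤ j → d i ≤ d j := fun i j hij =>
    Submodule.finrank_mono (fun x hx => kmono i j hij hx)
  have dbdd : ∀ i, d i ≤ Module.finrank k X := fun i => Submodule.finrank_le _
  -- find a stabilization point
  have hstep : ∃ i : ℕ, 0 < i ∧ d i = d (i + 1) := by
    by_contra hc
    push_neg at hc
    have hlt : ∀ i : ℕ, 0 < i → d i < d (i + 1) := fun i hi =>
      lt_of_le_of_ne (dmono i (i + 1) (Nat.le_succ i)) (hc i hi)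
    have grow : ∀ c : ℕ, d 1 + c ≤ d (1 + c) := by
      intro c
      induction c with
      | zero => simp
      | succ c ih =>
          have h1 := hlt (1 + c) (by omega)
          have h2 : 1 + (c + 1) = (1 + c) + 1 := by omega
          rw [h2]
          omega
    have := grow (Module.finrank k X + 1)
    have := dbdd (1 + (Module.finrank k X + 1))
    omega
  obtain ⟨i, hi, hdi⟩ := hstep
  -- kernels stabilize from i on
  have hker1 : LinearMap.ker (f ^ i) = LinearMap.ker (f ^ (i + 1)) := by
    have := Submodule.eq_of_le_of_finrank_le
      (S₁ := Submodule.restrictScalars k (LinearMap.ker (f ^ i)))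
      (S₂ := Submodule.restrictScalars k (LinearMap.ker (f ^ (i + 1))))
      (fun x hx => kmono i (i + 1) (Nat.le_succ i) hx) (le_of_eq hdi.symm)
    exact Submodule.restrictScalars_injective k _ _ this
  have kstab : ∀ m : ℕ, i ≤ m → LinearMap.ker (f ^ m) = LinearMap.ker (f ^ i) := by
    intro m hm
    induction m, hm using Nat.le_induction with
    | base => rfl
    | succ m hm ih =>
        refine le_antisymm ?_ (kmono i (m + 1) (by omega))
        intro x hx
        rw [LinearMap.mem_ker, pow_succ, Module.End.mul_apply] at hx
        have hfx : f x ∈ LinearMap.ker (f ^ m) := LinearMap.mem_ker.2 hx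
        rw [ih] at hfx
        have : x ∈ LinearMap.ker (f ^ (i + 1)) := by
          rw [LinearMap.mem_ker, pow_succ, Module.End.mul_apply]
          exact LinearMap.mem_ker.1 hfx
        rw [← hker1] at this
        exact this
  -- ranges stabilize as well, by rank-nullity
  have hrange : LinearMap.range (f ^ (i + i)) = LinearMap.range (f ^ i) := by
    have e1 : ∀ j : ℕ,
        Module.finrank k (Submodule.restrictScalars k (LinearMap.range (f ^ j))) + d j
          = Module.finrank k X := by
      intro j
      have := LinearMap.finrank_range_add_finrank_ker ((f ^ j).restrictScalars k)
      have hker : LinearMap.ker ((f ^ j).restrictScalars k)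
          = Submodule.restrictScalars k (LinearMap.ker (f ^ j)) :=
        Submodule.ext fun x => Iff.rfl
      have hrg : LinearMap.range ((f ^ j).restrictScalars k)
          = Submodule.restrictScalars k (LinearMap.range (f ^ j)) :=
        Submodule.ext fun x => Iff.rfl
      rw [hker, hrg] at this
      exact this
    have hdii : d (i + i) = d i := by
      simp only [hd]
      rw [kstab (i + i) (by omega)]
    have h1 := e1 i
    have h2 := e1 (i + i)
    refine Submodule.restrictScalars_injective k _ _ ?_
    refine Submodule.eq_of_le_of_finrank_le
      (fun x hx => rmono i (i + i) (by omega) hx) ?_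
    omega
  refine ⟨i, hi, ?_, ?_⟩
  · rw [Submodule.disjoint_def]
    rintro x hker ⟨y, rfl⟩
    have : y ∈ LinearMap.ker (f ^ (i + i)) := by
      rw [LinearMap.mem_ker, pow_add, Module.End.mul_apply]
      exact LinearMap.mem_ker.1 hker
    rw [kstab (i + i) (by omega)] at this
    exact LinearMap.mem_ker.1 this
  · rw [codisjoint_iff, eq_top_iff]
    intro x _
    have : (f ^ i) x ∈ LinearMap.range (f ^ (i + i)) := by
      rw [hrange]
      exact ⟨x, rfl⟩
    obtain ⟨z, hz⟩ := this
    rw [Submodule.mem_sup]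
    refine ⟨x - (f ^ i) z, ?_, (f ^ i) z, ⟨z, rfl⟩, by abel⟩
    rw [LinearMap.mem_ker, map_sub, ← Module.End.mul_apply, ← pow_add, hz, sub_self]

/-- An endomorphism of a finite-dimensional indecomposable module is bijective
or nilpotent. -/
theorem dichotomy (X : Type u) [AddCommGroup X] [Module R X] [Module k X]
    [IsScalarTower k R X] [FiniteDimensional k X] (hind : IsIndecomposableModule R X)
    (f : X →ₗ[R] X) : Function.Bijective f ∨ IsNilpotent f := by
  obtain ⟨i, hi, hcompl⟩ := fitting k R X f
  rcases hind.2 _ _ hcompl with hk | hr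
  · left
    have hinj : Function.Injective f := by
      rw [← LinearMap.ker_eq_bot]
      refine le_antisymm ?_ bot_le
      refine le_trans (fun x hx => ?_) (le_of_eq hk)
      rw [LinearMap.mem_ker] at hx ⊢
      obtain ⟨c, rfl⟩ := Nat.exists_eq_add_of_le hi
      rw [add_comm, pow_add, pow_one, Module.End.mul_apply, hx, map_zero]
    refine ⟨hinj, ?_⟩
    have : Function.Injective (f.restrictScalars k) := hinj
    exact LinearMap.injective_iff_surjective.1 this
  · right
    exact ⟨i, LinearMap.range_eq_bot.1 hr⟩

theorem nilp_not_surj (X : Type u) [AddCommGroup X] [Module R X] [Nontrivial X]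
    (f : X →ₗ[R] X) (hn : IsNilpotent f) : ¬ Function.Surjective f := by
  intro hs
  obtain ⟨n, hfn⟩ := hn
  have hsn : ∀ m : ℕ, Function.Surjective ⇑(f ^ m) := by
    intro m
    induction m with
    | zero => intro x; exact ⟨x, by simp⟩
    | succ m ih =>
        have hco : ⇑(f ^ (m + 1)) = ⇑(f ^ m) ∘ ⇑f := by
          funext x; rw [pow_succ]; rfl
        rw [hco]
        exact ih.comp hs
  obtain ⟨x, hx⟩ := exists_ne (0 : X)
  obtain ⟨y, hy⟩ := hsn n x
  rw [hfn] at hy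
  exact hx (by simpa using hy.symm)


theorem sum_bijective (X : Type u) [AddCommGroup X] [Module R X] [Module k X]
    [IsScalarTower k R X] [FiniteDimensional k X] (hind : IsIndecomposableModule R X)
    {ι : Type} [Fintype ι] (f : ι → (X →ₗ[R] X)) (hsum : ∑ j, f j = LinearMap.id) :
    ∃ j, Function.Bijective (f j) := by
  haveI : Nontrivial X := hind.1
  by_contra hc
  push_neg at hc
  have hnil : ∀ g : X →ₗ[R] X, ¬ Function.Bijective g → IsNilpotent g := fun g hg =>
    (dichotomy k R X hind g).resolve_left hg
  have key : ∀ a b : X →ₗ[R] X, IsNilpotent a → IsNilpotent b →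
      ¬ Function.Bijective ⇑(a + b) := by
    intro a b ha hb hbij
    have hu : IsUnit ((a + b) : Module.End R X) := (Module.End.isUnit_iff _).2 hbij
    set v : Module.End R X := ↑hu.unit⁻¹ with hv
    have hvb : Function.Bijective v := (Module.End.isUnit_iff v).1 (hu.unit⁻¹).isUnit
    have hsum1 : a * v + b * v = 1 := by
      rw [← add_mul, hv]
      exact hu.mul_val_inv
    have hav : ¬ Function.Bijective ⇑(a * v) := by
      intro h
      have hco : ⇑(a * v) = ⇑a ∘ ⇑v := rfl
      rw [hco] at h
      exact nilp_not_surj R X a ha (Function.Surjective.of_comp h.2)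
    have hbv : ¬ Function.Bijective ⇑(b * v) := by
      intro h
      have hco : ⇑(b * v) = ⇑b ∘ ⇑v := rfl
      rw [hco] at h
      exact nilp_not_surj R X b hb (Function.Surjective.of_comp h.2)
    have hnav : IsNilpotent (a * v) := hnil _ hav
    have h1 : IsUnit ((1 : Module.End R X) - a * v) := hnav.isUnit_one_sub
    have h2 : (1 : Module.End R X) - a * v = b * v := by
      rw [← hsum1]; abel
    rw [h2] at h1
    exact hbv ((Module.End.isUnit_iff _).1 h1)
  classical
  have main : ∀ s : Finset ι, ¬ Function.Bijective ⇑(∑ j ∈ s, f j) := by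
    intro s
    induction s using Finset.induction_on with
    | empty =>
        simp only [Finset.sum_empty]
        intro h
        obtain ⟨x, hx⟩ := exists_ne (0 : X)
        exact hx (h.1 (show (0 : X →ₗ[R] X) x = (0 : X →ₗ[R] X) 0 by simp))
    | insert a s hnot ih =>
        rw [Finset.sum_insert hnot]
        exact key _ _ (hnil _ (hc _)) (hnil _ ih)
  have hmain := main Finset.univ
  rw [hsum] at hmain
  exact hmain (by rw [LinearMap.id_coe]; exact Function.bijective_id)

theorem exchange (X : Type u) [AddCommGroup X] [Module R X] [Module k X]
    [IsScalarTower k R X] [FiniteDimensional k X] (hind : IsIndecomposableModule R X)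
    {ι : Type} [Fintype ι] (C : ι → ModuleCat.{u} R)
    (q : ∀ j, X →ₗ[R] ↥(C j)) (p : ∀ j, ↥(C j) →ₗ[R] X)
    (hs : (∑ j, (p j) ∘ₗ (q j)) = LinearMap.id) :
    ∃ (j : ι) (i' : X →ₗ[R] ↥(C j)) (p' : ↥(C j) →ₗ[R] X), ∀ x, p' (i' x) = x := by
  obtain ⟨j, hbij⟩ := sum_bijective k R X hind (fun j => (p j) ∘ₗ (q j)) hs
  let e := LinearEquiv.ofBijective _ hbij
  refine ⟨j, q j, e.symm.toLinearMap ∘ₗ p j, fun x => ?_⟩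
  change e.symm (((p j) ∘ₗ (q j)) x) = x
  exact e.symm_apply_apply x

theorem retract_indec (X : Type u) [AddCommGroup X] [Module R X] (hX : Nontrivial X)
    (C : Type u) [AddCommGroup C] [Module R C] (hC : IsIndecomposableModule R C)
    (i' : X →ₗ[R] C) (p' : C →ₗ[R] X) (h : ∀ x, p' (i' x) = x) :
    Nonempty (X ≃ₗ[R] C) := by
  set e : C →ₗ[R] C := i' ∘ₗ p' with he
  have hidem : ∀ c, e (e c) = e c := fun c => by
    simp only [he, LinearMap.comp_apply, h]
  have hcompl : IsCompl (LinearMap.range e) (LinearMap.ker e) := by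
    constructor
    · rw [Submodule.disjoint_def]
      rintro x ⟨y, rfl⟩ hker
      have hzero : e (e y) = 0 := LinearMap.mem_ker.1 hker
      rw [hidem] at hzero
      exact hzero
    · rw [codisjoint_iff, eq_top_iff]
      intro x _
      rw [Submodule.mem_sup]
      exact ⟨e x, ⟨x, rfl⟩, x - e x,
        LinearMap.mem_ker.2 (by rw [map_sub, hidem, sub_self]), by abel⟩
  rcases hC.2 _ _ hcompl with h1 | h2
  · exfalso
    have he0 : e = 0 := LinearMap.range_eq_bot.1 h1
    obtain ⟨x, hx⟩ := exists_ne (0 : X)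
    have h3 : i' x = 0 := by
      have h4 : e (i' x) = i' x := by
        simp only [he, LinearMap.comp_apply, h]
      rw [he0] at h4
      simpa using h4.symm
    exact hx (by rw [← h x, h3, map_zero])
  · have hinj : Function.Injective e := by
      rw [← LinearMap.ker_eq_bot]; exact h2
    have hid : ∀ c, e c = c := fun c => hinj (hidem c)
    exact ⟨LinearEquiv.ofLinear i' p' (LinearMap.ext hid) (LinearMap.ext h)⟩

/-- The canonical `k`-linear inclusion of an `R`-submodule. -/
def usub (X : Type u) [AddCommGroup X] [Module R X] [Module k X] [IsScalarTower k R X]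
    (U : Submodule R X) : ↥U →ₗ[k] X where
  toFun := fun x => x.1
  map_add' := fun _ _ => rfl
  map_smul' := fun _ _ => rfl

theorem decomp_exists (d : ℕ) : ∀ (X : Type u) [AddCommGroup X] [Module R X] [Module k X]
    [IsScalarTower k R X] [FiniteDimensional k X], Module.finrank k X ≤ d →
    ∃ (ι : Type) (_ : Fintype ι) (C : ι → ModuleCat.{u} R) (q : ∀ j, X →ₗ[R] ↥(C j))
      (p : ∀ j, ↥(C j) →ₗ[R] X),
      (∑ j, (p j) ∘ₗ (q j)) = LinearMap.id ∧
      ∀ j, Module.Finite R ↥(C j) ∧ IsIndecomposableModule R ↥(C j) := by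
  induction d with
  | zero =>
      intro X _ _ _ _ _ hle
      haveI hss : Subsingleton X := by
        have h0 : Module.finrank k X = 0 := le_antisymm hle (Nat.zero_le _)
        exact Module.finrank_zero_iff.1 h0
      exact ⟨PEmpty, inferInstance, fun j => j.elim, fun j => j.elim, fun j => j.elim,
        by
          rw [Finset.univ_eq_empty, Finset.sum_empty]
          exact LinearMap.ext fun x => Subsingleton.elim _ _,
        fun j => j.elim⟩
  | succ d ih =>
      intro X _ _ _ _ _ hle
      by_cases hss : Subsingleton X
      · exact ⟨PEmpty, inferInstance, fun j => j.elim, fun j => j.elim, fun j => j.elim,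
          by
            rw [Finset.univ_eq_empty, Finset.sum_empty]
            exact LinearMap.ext fun x => Subsingleton.elim _ _,
          fun j => j.elim⟩
      haveI : Nontrivial X := not_subsingleton_iff_nontrivial.1 hss
      by_cases hind : IsIndecomposableModule R X
      · refine ⟨PUnit, inferInstance, fun _ => ModuleCat.of R X,
          fun _ => LinearMap.id, fun _ => LinearMap.id, ?_, ?_⟩
        · rw [Finset.sum_const, Finset.card_univ]
          simp
        · intro j
          exact ⟨Module.Finite.of_restrictScalars_finite k R X, hind⟩
      · have h2 : ¬ ∀ S T : Submodule R X, IsCompl S T → S = ⊥ ∨ T = ⊥ := fun hall =>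
          hind ⟨‹Nontrivial X›, hall⟩
        push_neg at h2
        obtain ⟨S, T, hcompl, hSne, hTne⟩ := h2
        have hfd : ∀ U : Submodule R X, FiniteDimensional k ↥U := fun U =>
          FiniteDimensional.of_injective (usub k R X U) Subtype.val_injective
        haveI := hfd S
        haveI := hfd T
        have hfr : ∀ U : Submodule R X,
            Module.finrank k ↥U
              = Module.finrank k ↥(Submodule.restrictScalars k U) := by
          intro U
          have hr : LinearMap.range (usub k R X U) = Submodule.restrictScalars k U := by
            ext x
            constructor
            · rintro ⟨y, rfl⟩; exact y.2
            · intro hx; exact ⟨⟨x, hx⟩, rfl⟩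
          rw [← hr]
          exact LinearEquiv.finrank_eq (LinearEquiv.ofInjective (usub k R X U)
            Subtype.val_injective)
        have hlt : ∀ U : Submodule R X, U ≠ ⊤ →
            Module.finrank k ↥U < Module.finrank k X := by
          intro U hU
          have h1 : Submodule.restrictScalars k U < ⊤ :=
            lt_top_iff_ne_top.2 (fun hc =>
              hU ((Submodule.restrictScalars_eq_top_iff _ _ _).1 hc))
          have h2 := Submodule.finrank_lt h1.ne
          rw [hfr U]
          exact h2
        have hSt : S ≠ ⊤ := by
          intro hc
          apply hTne
          have hdis := hcompl.disjoint
          rw [hc] at hdis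
          exact (disjoint_top).1 hdis.symm
        have hTt : T ≠ ⊤ := by
          intro hc
          apply hSne
          have hdis := hcompl.disjoint
          rw [hc] at hdis
          exact (disjoint_top).1 hdis
        have hleS : Module.finrank k ↥S ≤ d := by
          have := hlt S hSt; omega
        have hleT : Module.finrank k ↥T ≤ d := by
          have := hlt T hTt; omega
        obtain ⟨ι1, hι1, C1, q1, p1, hsum1, hcond1⟩ := ih ↥S hleS
        obtain ⟨ι2, hι2, C2, q2, p2, hsum2, hcond2⟩ := ih ↥T hleT
        let prS : X →ₗ[R] ↥S := S.linearProjOfIsCompl T hcompl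
        let prT : X →ₗ[R] ↥T := T.linearProjOfIsCompl S hcompl.symm
        refine ⟨ι1 ⊕ ι2, inferInstance, Sum.elim C1 C2,
          fun j => Sum.rec (fun j1 => (q1 j1) ∘ₗ prS) (fun j2 => (q2 j2) ∘ₗ prT) j,
          fun j => Sum.rec (fun j1 => S.subtype ∘ₗ p1 j1) (fun j2 => T.subtype ∘ₗ p2 j2) j,
          ?_, ?_⟩
        · apply LinearMap.ext
          intro x
          rw [LinearMap.sum_apply, Fintype.sum_sum_type]
          have hA : ∀ j1 : ι1,
              ((S.subtype ∘ₗ p1 j1) ∘ₗ ((q1 j1) ∘ₗ prS)) x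
                = S.subtype ((p1 j1 ∘ₗ q1 j1) (prS x)) := fun j1 => rfl
          have hB : ∀ j2 : ι2,
              ((T.subtype ∘ₗ p2 j2) ∘ₗ ((q2 j2) ∘ₗ prT)) x
                = T.subtype ((p2 j2 ∘ₗ q2 j2) (prT x)) := fun j2 => rfl
          calc (∑ j1, ((S.subtype ∘ₗ p1 j1) ∘ₗ ((q1 j1) ∘ₗ prS)) x)
                + (∑ j2, ((T.subtype ∘ₗ p2 j2) ∘ₗ ((q2 j2) ∘ₗ prT)) x)
              = S.subtype ((∑ j1, p1 j1 ∘ₗ q1 j1) (prS x))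
                + T.subtype ((∑ j2, p2 j2 ∘ₗ q2 j2) (prT x)) := by
                rw [LinearMap.sum_apply, LinearMap.sum_apply, map_sum, map_sum]
                exact congrArg₂ (· + ·) (Finset.sum_congr rfl fun j1 _ => hA j1)
                  (Finset.sum_congr rfl fun j2 _ => hB j2)
            _ = (prS x : X) + (prT x : X) := by rw [hsum1, hsum2]; rfl
            _ = x := Submodule.projection_add_projection_eq_self hcompl x
            _ = LinearMap.id x := rfl
        · rintro (j1 | j2)
          · exact hcond1 j1
          · exact hcond2 j2

end ModTheory

section BalFin

variable (k : Type u) [Field k]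
  (B : Type u) [Ring B] [Algebra k B] (C : Type u) [Ring C] [Algebra k C]
  (M : Type u) [AddCommGroup M] [Module Bᵐᵒᵖ M] [Module k M] [IsScalarTower k Bᵐᵒᵖ M]
  (N : Type u) [AddCommGroup N] [Module B N] [Module Cᵐᵒᵖ N] [SMulCommClass B Cᵐᵒᵖ N]
  [Module k N] [IsScalarTower k B N] [IsScalarTower k Cᵐᵒᵖ N]

theorem balTensor_algebraMap_smul (c : k) (z : BalTensor B M N) :
    (algebraMap k Cᵐᵒᵖ c) • z = c • z := by
  induction z using BalTensor.induction_on with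
  | h0 => rw [smul_zero, smul_zero]
  | ht m n =>
      rw [BalTensor.rsmul_tmul, BalTensor.lsmul_tmul, algebraMap_smul]
      have h1 : c • m = (algebraMap k Bᵐᵒᵖ c) • m := (algebraMap_smul Bᵐᵒᵖ c m).symm
      have h2 : algebraMap k Bᵐᵒᵖ c = op (algebraMap k B c) := rfl
      rw [h1, h2, BalTensor.balance, algebraMap_smul]
  | ha x y hx hy => rw [smul_add, smul_add, hx, hy]

theorem balTensor_finite [FiniteDimensional k M] [FiniteDimensional k N] :
    Module.Finite Cᵐᵒᵖ (BalTensor B M N) := by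
  obtain ⟨sM, hsM⟩ := Module.Finite.fg_top (R := k) (M := M)
  obtain ⟨sN, hsN⟩ := Module.Finite.fg_top (R := k) (M := N)
  set T : Set (BalTensor B M N) :=
    (fun p : M × N => BalTensor.tmul B M N p.1 p.2) '' ((sM : Set M) ×ˢ (sN : Set N)) with hT
  have keyN : ∀ m, m ∈ (sM : Set M) → ∀ n : N,
      BalTensor.tmul B M N m n ∈ Submodule.span Cᵐᵒᵖ T := by
    intro m hm n
    have hn : n ∈ Submodule.span k (sN : Set N) := by rw [hsN]; trivial
    induction hn using Submodule.span_induction with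
    | mem x hx => exact Submodule.subset_span ⟨(m, x), ⟨hm, hx⟩, rfl⟩
    | zero => rw [BalTensor.tmul_zero]; exact Submodule.zero_mem _
    | add x y _ _ hx hy => rw [BalTensor.tmul_add]; exact Submodule.add_mem _ hx hy
    | smul c x _ hx =>
        have h1 : c • x = (algebraMap k Cᵐᵒᵖ c) • x := (algebraMap_smul Cᵐᵒᵖ c x).symm
        rw [h1, ← BalTensor.rsmul_tmul]
        exact Submodule.smul_mem _ _ hx
  have key : ∀ m n, BalTensor.tmul B M N m n ∈ Submodule.span Cᵐᵒᵖ T := by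
    intro m
    have hm : m ∈ Submodule.span k (sM : Set M) := by rw [hsM]; trivial
    induction hm using Submodule.span_induction with
    | mem x hx => exact keyN x hx
    | zero => intro n; rw [BalTensor.zero_tmul]; exact Submodule.zero_mem _
    | add x y _ _ hx hy =>
        intro n; rw [BalTensor.add_tmul]; exact Submodule.add_mem _ (hx n) (hy n)
    | smul c x _ hx =>
        intro n
        have h1 : c • x = (algebraMap k Bᵐᵒᵖ c) • x := (algebraMap_smul Bᵐᵒᵖ c x).symm
        have h2 : algebraMap k Bᵐᵒᵖ c = op (algebraMap k B c) := rfl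
        have h3 : BalTensor.tmul B M N (c • x) n
            = BalTensor.tmul B M N x (algebraMap k B c • n) := by
          rw [h1, h2, BalTensor.balance]
        rw [h3, algebraMap_smul]
        exact hx (c • n)
  have hspan : Submodule.span Cᵐᵒᵖ T = ⊤ := by
    rw [eq_top_iff]
    intro z hz
    clear hz
    induction z using BalTensor.induction_on with
    | h0 => exact Submodule.zero_mem _
    | ht m n => exact key m n
    | ha x y hx hy => exact Submodule.add_mem _ hx hy
  rw [Module.finite_def, Submodule.fg_def]
  exact ⟨T, Set.Finite.image _ (Set.Finite.prod sM.finite_toSet sN.finite_toSet), hspan⟩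

end BalFin




section Assemble

/-- The main transfer theorem: if `B ≥_J A` and `Aᵐᵒᵖ` has finite representation type,
then so does `Bᵐᵒᵖ`. -/
theorem frt_transfer (k A B : Type u) [Field k]
    [Ring A] [Algebra k A] [FiniteDimensional k A]
    [Ring B] [Algebra k B] [FiniteDimensional k B]
    (h : Jge k B A) :
    FiniteRepresentationType Aᵐᵒᵖ → FiniteRepresentationType Bᵐᵒᵖ := by
  intro hA
  obtain ⟨Mb, Nb, ιf, pf, hι, hp2, hpi⟩ := h
  obtain ⟨n, V, hV⟩ := hA
  haveI hfinAop : Module.Finite k Aᵐᵒᵖ :=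
    Module.Finite.equiv (MulOpposite.opLinearEquiv k : A ≃ₗ[k] Aᵐᵒᵖ)
  haveI hfinBop : Module.Finite k Bᵐᵒᵖ :=
    Module.Finite.equiv (MulOpposite.opLinearEquiv k : B ≃ₗ[k] Bᵐᵒᵖ)
  -- choose decompositions of `V i ⊗_A N` for each `i`
  have hchoice : ∀ i : Fin n, ∃ (ι : Type) (_ : Fintype ι)
      (C : ι → ModuleCat.{u} Bᵐᵒᵖ)
      (q : ∀ j, (BalTensor A ↥(V i) Nb.X) →ₗ[Bᵐᵒᵖ] ↥(C j))
      (p : ∀ j, ↥(C j) →ₗ[Bᵐᵒᵖ] (BalTensor A ↥(V i) Nb.X)),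
      Module.Finite Aᵐᵒᵖ ↥(V i) →
        ((∑ j, (p j) ∘ₗ (q j)) = LinearMap.id ∧
         ∀ j, Module.Finite Bᵐᵒᵖ ↥(C j) ∧ IsIndecomposableModule Bᵐᵒᵖ ↥(C j)) := by
    intro i
    by_cases hfin : Module.Finite Aᵐᵒᵖ ↥(V i)
    · letI : Module k ↥(V i) := Module.compHom _ (algebraMap k Aᵐᵒᵖ)
      haveI : IsScalarTower k Aᵐᵒᵖ ↥(V i) :=
        IsScalarTower.of_algebraMap_smul (fun c x => rfl)
      haveI : Module.Finite k ↥(V i) := Module.Finite.trans Aᵐᵒᵖ ↥(V i)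
      haveI hGfin : Module.Finite Bᵐᵒᵖ (BalTensor A ↥(V i) Nb.X) :=
        balTensor_finite k A B ↥(V i) Nb.X
      haveI : IsScalarTower k Bᵐᵒᵖ (BalTensor A ↥(V i) Nb.X) :=
        IsScalarTower.of_algebraMap_smul (balTensor_algebraMap_smul k A B ↥(V i) Nb.X)
      haveI : Module.Finite k (BalTensor A ↥(V i) Nb.X) :=
        Module.Finite.trans Bᵐᵒᵖ (BalTensor A ↥(V i) Nb.X)
      obtain ⟨ι, hι, C, q, p, hsum, hcond⟩ := decomp_exists k Bᵐᵒᵖ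
        (Module.finrank k (BalTensor A ↥(V i) Nb.X)) (BalTensor A ↥(V i) Nb.X) le_rfl
      exact ⟨ι, hι, C, q, p, fun _ => ⟨hsum, hcond⟩⟩
    · exact ⟨PEmpty, inferInstance, fun j => j.elim, fun j => j.elim, fun j => j.elim,
        fun hf => absurd hf hfin⟩
  choose fam ffin C q p hcond using hchoice
  let e := Fintype.equivFin (Σ i : Fin n, fam i)
  refine ⟨Fintype.card (Σ i : Fin n, fam i), fun j => C (e.symm j).1 (e.symm j).2, ?_⟩
  intro X hXfin hXind
  haveI : Nontrivial ↥X := hXind.1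
  letI : Module k ↥X := Module.compHom _ (algebraMap k Bᵐᵒᵖ)
  haveI : IsScalarTower k Bᵐᵒᵖ ↥X := IsScalarTower.of_algebraMap_smul (fun c x => rfl)
  haveI : Module.Finite k ↥X := Module.Finite.trans Bᵐᵒᵖ ↥X
  -- the retract X → (X ⊗ M) ⊗ N → X
  obtain ⟨iX, pX, hpiX⟩ := retract_exists A B Mb.X Nb.X ↥X pf hp2.map_add hp2.map_lsmul
    hp2.map_rsmul ιf hι hp2 hpi
  -- decompose the A-module X ⊗ M
  haveI hFXfin : Module.Finite Aᵐᵒᵖ (BalTensor B ↥X Mb.X) :=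
    balTensor_finite k B A ↥X Mb.X
  haveI : IsScalarTower k Aᵐᵒᵖ (BalTensor B ↥X Mb.X) :=
    IsScalarTower.of_algebraMap_smul (balTensor_algebraMap_smul k B A ↥X Mb.X)
  haveI : Module.Finite k (BalTensor B ↥X Mb.X) :=
    Module.Finite.trans Aᵐᵒᵖ (BalTensor B ↥X Mb.X)
  obtain ⟨κ, hκ, D, qD, pD, hsumD, hcondD⟩ := decomp_exists k Aᵐᵒᵖ
    (Module.finrank k (BalTensor B ↥X Mb.X)) (BalTensor B ↥X Mb.X) le_rfl
  -- X is a retract of ⊕_j (D j ⊗ N); apply the exchange lemma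
  obtain ⟨j0, i1, p1, h1⟩ := exchange k Bᵐᵒᵖ ↥X hXind
    (fun j : κ => ModuleCat.of Bᵐᵒᵖ (BalTensor A ↥(D j) Nb.X))
    (fun j => (gmapL A (BalTensor B ↥X Mb.X) ↥(D j) Nb.X B (qD j)) ∘ₗ iX)
    (fun j => pX ∘ₗ (gmapL A ↥(D j) (BalTensor B ↥X Mb.X) Nb.X B (pD j)))
    (by
      apply LinearMap.ext
      intro x
      rw [LinearMap.sum_apply]
      have hstep : ∀ j : κ,
          ((pX ∘ₗ (gmapL A ↥(D j) (BalTensor B ↥X Mb.X) Nb.X B (pD j))) ∘ₗ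
            ((gmapL A (BalTensor B ↥X Mb.X) ↥(D j) Nb.X B (qD j)) ∘ₗ iX)) x
          = pX (gmap A (BalTensor B ↥X Mb.X) (BalTensor B ↥X Mb.X) Nb.X
              ((pD j) ∘ₗ (qD j)) (iX x)) := by
        intro j
        simp only [LinearMap.comp_apply, gmapL_apply]
        rw [gmap_comp]
      rw [Finset.sum_congr rfl (fun j _ => hstep j), ← map_sum,
        ← gmap_sum, hsumD, gmap_id, hpiX]
      rfl)
  -- transport along the isomorphism D j0 ≃ V i0
  have hgj : ∃ i, Nonempty (↥(D j0) ≃ₗ[Aᵐᵒᵖ] ↥(V i)) :=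
    hV (D j0) (hcondD j0).1 (hcondD j0).2
  obtain ⟨i0, ⟨e0⟩⟩ := hgj
  haveI := (hcondD j0).1
  haveI hVfin : Module.Finite Aᵐᵒᵖ ↥(V i0) := Module.Finite.equiv e0
  obtain ⟨hsumC, hcondC⟩ := hcond i0 hVfin
  -- X is a retract of V i0 ⊗ N
  set i2 : ↥X →ₗ[Bᵐᵒᵖ] BalTensor A ↥(V i0) Nb.X :=
    (gmapL A ↥(D j0) ↥(V i0) Nb.X B e0.toLinearMap) ∘ₗ i1 with hi2
  set p2 : BalTensor A ↥(V i0) Nb.X →ₗ[Bᵐᵒᵖ] ↥X :=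
    p1 ∘ₗ (gmapL A ↥(V i0) ↥(D j0) Nb.X B e0.symm.toLinearMap) with hp2'
  have h2 : ∀ x, p2 (i2 x) = x := by
    intro x
    have hee : e0.symm.toLinearMap ∘ₗ e0.toLinearMap = LinearMap.id := by
      apply LinearMap.ext; intro z; simp
    have hcc : p2 (i2 x)
        = p1 (gmap A ↥(D j0) ↥(D j0) Nb.X (e0.symm.toLinearMap ∘ₗ e0.toLinearMap) (i1 x)) := by
      rw [gmap_comp]; rfl
    rw [hcc, hee, gmap_id]
    exact h1 x
  -- second exchange, inside the chosen decomposition of V i0 ⊗ N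
  obtain ⟨l, i3, p3, h3⟩ := exchange k Bᵐᵒᵖ ↥X hXind (C i0)
    (fun l => (q i0 l) ∘ₗ i2) (fun l => p2 ∘ₗ (p i0 l))
    (by
      apply LinearMap.ext
      intro x
      rw [LinearMap.sum_apply]
      have hstep : ∀ l, ((p2 ∘ₗ (p i0 l)) ∘ₗ ((q i0 l) ∘ₗ i2)) x
          = p2 (((p i0 l) ∘ₗ (q i0 l)) (i2 x)) := fun l => rfl
      rw [Finset.sum_congr rfl (fun l _ => hstep l), ← map_sum, ← LinearMap.sum_apply,
        hsumC]
      simp only [LinearMap.id_apply]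
      exact h2 x)
  obtain ⟨eiso⟩ := retract_indec Bᵐᵒᵖ ↥X ‹Nontrivial ↥X› ↥(C i0 l) (hcondC l).2 i3 p3 h3
  refine ⟨e ⟨i0, l⟩, ?_⟩
  have hh : e.symm (e ⟨i0, l⟩) = ⟨i0, l⟩ := e.symm_apply_apply ⟨i0, l⟩
  show Nonempty (↥X ≃ₗ[Bᵐᵒᵖ] ↥(C (e.symm (e ⟨i0, l⟩)).fst (e.symm (e ⟨i0, l⟩)).snd))
  rw [hh]
  exact ⟨eiso⟩

end Assemble

/-- Over an algebraically closed field, if `A ≤_J B` and `A` has finite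
representation type (for right modules), then so does `B`. In particular, `J`-equivalent
algebras have finite representation type simultaneously. -/
theorem stmt10 (k A B : Type u) [Field k] [IsAlgClosed k]
    [Ring A] [Algebra k A] [FiniteDimensional k A]
    [Ring B] [Algebra k B] [FiniteDimensional k B]
    (h : Jge k B A) :
    (FiniteRepresentationType Aᵐᵒᵖ → FiniteRepresentationType Bᵐᵒᵖ) ∧
    (Jequiv k A B → (FiniteRepresentationType Aᵐᵒᵖ ↔ FiniteRepresentationType Bᵐᵒᵖ)) := by
  have main := frt_transfer k A B h
  exact ⟨main, fun hJ => ⟨main, frt_transfer k B A hJ.1⟩⟩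

end

end JJ
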